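/- Let A be a symmetric Frobenius algebra in a sovereign tensor category C such that m ∘ Δ = id_A. Then A is a non-degenerate algebra, i.e. the morphism Φ_A : A → A^∨ is invertible. -/

import Mathlib

/-!
Common framework for formalizing Kong–Runkel, "Morita classes of algebras in
modular tensor categories" (arXiv:0708.1897).

We set up: sovereign tensor categories (two-sided duality data agreeing on
objects and morphisms), algebras (= monoid objects `Mon_ C`), the trace
pairing `Φ_A` and non-degeneracy, the canonical Frobenius structure of a
non-degenerate algebra, and (symmetric, special, commutative, haploid)
Frobenius properties.
-/

open CategoryTheory MonoidalCategory Limits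

universe v u

namespace KR

variable {C : Type u} [Category.{v} C] [MonoidalCategory C]

/-- A sovereign structure on a monoidal category: each object `X` has a two-sided
dual `dual X`, with evaluation/coevaluation `ev X : dual X ⊗ X ⟶ 𝟙`, `coev X : 𝟙 ⟶ X ⊗ dual X`
(making `dual X` a right dual) and `ev' X : X ⊗ dual X ⟶ 𝟙`, `coev' X : 𝟙 ⟶ dual X ⊗ X`
(making `dual X` a left dual), such that the two induced transposes of any morphism agree. -/
structure Sovereign (C : Type u) [Category.{v} C] [MonoidalCategory C] where
  dual : C → C
  ev : ∀ X : C, dual X ⊗ X ⟶ 𝟙_ C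
  coev : ∀ X : C, 𝟙_ C ⟶ X ⊗ dual X
  ev' : ∀ X : C, X ⊗ dual X ⟶ 𝟙_ C
  coev' : ∀ X : C, 𝟙_ C ⟶ dual X ⊗ X
  zig : ∀ X : C, (λ_ X).inv ≫ (coev X ▷ X) ≫ (α_ X (dual X) X).hom ≫ (X ◁ ev X) ≫ (ρ_ X).hom = 𝟙 X
  zag : ∀ X : C, (ρ_ (dual X)).inv ≫ (dual X ◁ coev X) ≫ (α_ (dual X) X (dual X)).inv ≫
      (ev X ▷ dual X) ≫ (λ_ (dual X)).hom = 𝟙 (dual X)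
  zig' : ∀ X : C, (ρ_ X).inv ≫ (X ◁ coev' X) ≫ (α_ X (dual X) X).inv ≫ (ev' X ▷ X) ≫
      (λ_ X).hom = 𝟙 X
  zag' : ∀ X : C, (λ_ (dual X)).inv ≫ (coev' X ▷ dual X) ≫ (α_ (dual X) X (dual X)).hom ≫
      (dual X ◁ ev' X) ≫ (ρ_ (dual X)).hom = 𝟙 (dual X)
  /-- Sovereignty: the right-duality transpose of any morphism agrees with its
  left-duality transpose. -/
  sovereign : ∀ {X Y : C} (f : X ⟶ Y),
    (ρ_ (dual Y)).inv ≫ (dual Y ◁ coev X) ≫ (dual Y ◁ (f ▷ dual X)) ≫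
        (α_ (dual Y) Y (dual X)).inv ≫ (ev Y ▷ dual X) ≫ (λ_ (dual X)).hom
      = (λ_ (dual Y)).inv ≫ (coev' X ▷ dual Y) ≫ ((dual X ◁ f) ▷ dual Y) ≫
        (α_ (dual X) Y (dual Y)).hom ≫ (dual X ◁ ev' Y) ≫ (ρ_ (dual X)).hom

namespace Sovereign

variable (S : Sovereign C)

/-- The dual (transpose) of a morphism. -/
def dualHom {X Y : C} (f : X ⟶ Y) : S.dual Y ⟶ S.dual X :=
  (ρ_ (S.dual Y)).inv ≫ (S.dual Y ◁ S.coev X) ≫ (S.dual Y ◁ (f ▷ S.dual X)) ≫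
    (α_ (S.dual Y) Y (S.dual X)).inv ≫ (S.ev Y ▷ S.dual X) ≫ (λ_ (S.dual X)).hom

/-- Left trace of an endomorphism. -/
def trL {X : C} (f : X ⟶ X) : 𝟙_ C ⟶ 𝟙_ C :=
  S.coev' X ≫ (S.dual X ◁ f) ≫ S.ev X

/-- Right trace of an endomorphism. -/
def trR {X : C} (f : X ⟶ X) : 𝟙_ C ⟶ 𝟙_ C :=
  S.coev X ≫ (f ▷ S.dual X) ≫ S.ev' X

/-- Left dimension of an object, as an endomorphism of the tensor unit. -/
def dimL (X : C) : 𝟙_ C ⟶ 𝟙_ C := S.trL (𝟙 X)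

/-- Right dimension of an object, as an endomorphism of the tensor unit. -/
def dimR (X : C) : 𝟙_ C ⟶ 𝟙_ C := S.trR (𝟙 X)

end Sovereign

variable (S : Sovereign C)

/-- The trace pairing `π = d̃_A ∘ ((m ∘ (m ⊗ id)) ⊗ id_{A^∨}) ∘ (id_{A ⊗ A} ⊗ b_A)` of an
algebra `A`. -/
def pairing (A : Mon C) : A.X ⊗ A.X ⟶ 𝟙_ C :=
  (ρ_ (A.X ⊗ A.X)).inv ≫ ((A.X ⊗ A.X) ◁ S.coev A.X) ≫ (α_ (A.X ⊗ A.X) A.X (S.dual A.X)).inv ≫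
    (((MonObj.mul (X := A.X) ▷ A.X) ≫ MonObj.mul (X := A.X)) ▷ S.dual A.X) ≫ S.ev' A.X

/-- The morphism `Φ_A = (π ⊗ id_{A^∨}) ∘ (id_A ⊗ b_A) : A ⟶ A^∨` induced by the trace pairing. -/
def Phi (A : Mon C) : A.X ⟶ S.dual A.X :=
  (ρ_ A.X).inv ≫ (A.X ◁ S.coev A.X) ≫ (α_ A.X A.X (S.dual A.X)).inv ≫
    (pairing S A ▷ S.dual A.X) ≫ (λ_ (S.dual A.X)).hom

/-- An algebra is non-degenerate iff `Φ_A` is invertible. -/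
def Nondegenerate (A : Mon C) : Prop := IsIso (Phi S A)

/-- The canonical coproduct `Δ = (g ⊗ m) ∘ (b̃_A ⊗ id_A)` of an algebra, where `g` is
(meant to be) the inverse of `Φ_A`. -/
def canComulAux (A : Mon C) (g : S.dual A.X ⟶ A.X) : A.X ⟶ A.X ⊗ A.X :=
  (λ_ A.X).inv ≫ ((S.coev' A.X ≫ (g ▷ A.X)) ▷ A.X) ≫ (α_ A.X A.X A.X).hom ≫ (A.X ◁ MonObj.mul (X := A.X))

/-- The canonical counit `ε = η^∨ ∘ Φ_A` of a non-degenerate algebra. -/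
def canCounit (A : Mon C) : A.X ⟶ 𝟙_ C :=
  Phi S A ≫ (ρ_ (S.dual A.X)).inv ≫ (S.dual A.X ◁ MonObj.one (X := A.X)) ≫ S.ev A.X

/-- Coalgebra laws for a comultiplication/counit pair. -/
def IsCoalgebra (X : C) (Δ : X ⟶ X ⊗ X) (ε : X ⟶ 𝟙_ C) : Prop :=
  (Δ ≫ (Δ ▷ X) ≫ (α_ X X X).hom = Δ ≫ (X ◁ Δ)) ∧
  (Δ ≫ (ε ▷ X) ≫ (λ_ X).hom = 𝟙 X) ∧
  (Δ ≫ (X ◁ ε) ≫ (ρ_ X).hom = 𝟙 X)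

/-- The Frobenius property: `(id ⊗ m) ∘ (Δ ⊗ id) = Δ ∘ m = (m ⊗ id) ∘ (id ⊗ Δ)`,
together with the (co)algebra laws. -/
def IsFrobenius (A : Mon C) (Δ : A.X ⟶ A.X ⊗ A.X) (ε : A.X ⟶ 𝟙_ C) : Prop :=
  IsCoalgebra A.X Δ ε ∧
  ((Δ ▷ A.X) ≫ (α_ A.X A.X A.X).hom ≫ (A.X ◁ MonObj.mul (X := A.X)) = MonObj.mul (X := A.X) ≫ Δ) ∧
  ((A.X ◁ Δ) ≫ (α_ A.X A.X A.X).inv ≫ (MonObj.mul (X := A.X) ▷ A.X) = MonObj.mul (X := A.X) ≫ Δ)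

/-- A Frobenius algebra is symmetric iff the two canonical morphisms `A ⟶ A^∨`
built from `ε ∘ m` and the right resp. left duality coincide. -/
def IsSymmetric (A : Mon C) (ε : A.X ⟶ 𝟙_ C) : Prop :=
  (ρ_ A.X).inv ≫ (A.X ◁ S.coev A.X) ≫ (α_ A.X A.X (S.dual A.X)).inv ≫
      ((MonObj.mul (X := A.X) ≫ ε) ▷ S.dual A.X) ≫ (λ_ (S.dual A.X)).hom
  = (λ_ A.X).inv ≫ (S.coev' A.X ▷ A.X) ≫ (α_ (S.dual A.X) A.X A.X).hom ≫
      (S.dual A.X ◁ (MonObj.mul (X := A.X) ≫ ε)) ≫ (ρ_ (S.dual A.X)).hom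

end KR

namespace KR
open CategoryTheory MonoidalCategory

variable {C : Type u} [Category.{v} C] [MonoidalCategory C]

def hookL {P Q R : C} (u : 𝟙_ C ⟶ P ⊗ Q) (v : Q ⊗ R ⟶ 𝟙_ C) : R ⟶ P :=
  (λ_ R).inv ≫ (u ▷ R) ≫ (α_ P Q R).hom ≫ (P ◁ v) ≫ (ρ_ P).hom

def hookR {P Q R : C} (u : 𝟙_ C ⟶ P ⊗ Q) (v : R ⊗ P ⟶ 𝟙_ C) : R ⟶ Q :=
  (ρ_ R).inv ≫ (R ◁ u) ≫ (α_ R P Q).inv ≫ (v ▷ Q) ≫ (λ_ Q).hom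

lemma hookC0 {P Q R P' : C} (u : 𝟙_ C ⟶ P ⊗ Q) (v : R ⊗ P ⟶ 𝟙_ C) (v' : Q ⊗ P' ⟶ 𝟙_ C) :
    (hookR u v ▷ P') ≫ v' = (R ◁ hookL u v') ≫ v := by
  calc (hookR u v ▷ P') ≫ v'
      = ((ρ_ R).inv ▷ P') ≫ ((R ◁ u) ▷ P') ≫ ((α_ R P Q).inv ▷ P') ≫
        (α_ (R ⊗ P) Q P').hom ≫ (v ▷ (Q ⊗ P')) ≫ (𝟙_ C ◁ v') ≫ (λ_ (𝟙_ C)).hom := by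
        simp only [hookR, comp_whiskerRight, Category.assoc]; monoidal
    _ = ((ρ_ R).inv ▷ P') ≫ ((R ◁ u) ▷ P') ≫ ((α_ R P Q).inv ▷ P') ≫
        (α_ (R ⊗ P) Q P').hom ≫ ((R ⊗ P) ◁ v') ≫ (v ▷ 𝟙_ C) ≫ (λ_ (𝟙_ C)).hom := by
        rw [← whisker_exchange_assoc]
    _ = (R ◁ hookL u v') ≫ v := by
        simp only [hookL, MonoidalCategory.whiskerLeft_comp, Category.assoc]; monoidal

lemma hookC2 {P Q P' Q' : C} (u : 𝟙_ C ⟶ P ⊗ Q) (u' : 𝟙_ C ⟶ P' ⊗ Q') (v' : Q ⊗ P' ⟶ 𝟙_ C) :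
    u ≫ (P ◁ hookR u' v') = u' ≫ (hookL u v' ▷ Q') := by
  calc u ≫ (P ◁ hookR u' v')
      = (ρ_ (𝟙_ C)).inv ≫ (u ▷ 𝟙_ C) ≫ ((P ⊗ Q) ◁ u') ≫ (α_ P Q (P' ⊗ Q')).hom ≫
        (P ◁ (α_ Q P' Q').inv) ≫ (P ◁ (v' ▷ Q')) ≫ (P ◁ (λ_ Q').hom) := by
        simp only [hookR, MonoidalCategory.whiskerLeft_comp, Category.assoc]; monoidal
    _ = (ρ_ (𝟙_ C)).inv ≫ (𝟙_ C ◁ u') ≫ (u ▷ (P' ⊗ Q')) ≫ (α_ P Q (P' ⊗ Q')).hom ≫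
        (P ◁ (α_ Q P' Q').inv) ≫ (P ◁ (v' ▷ Q')) ≫ (P ◁ (λ_ Q').hom) := by
        rw [whisker_exchange_assoc]
    _ = u' ≫ (hookL u v' ▷ Q') := by
        simp only [hookL, comp_whiskerRight, Category.assoc]; monoidal

lemma hookC1 {P Q R P' Q' : C} (u : 𝟙_ C ⟶ P ⊗ Q) (v : R ⊗ P ⟶ 𝟙_ C)
    (u' : 𝟙_ C ⟶ P' ⊗ Q') (v' : Q ⊗ P' ⟶ 𝟙_ C) :
    hookR u v ≫ hookR u' v' = hookR u' ((R ◁ hookL u v') ≫ v) := by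
  rw [← hookC0]
  generalize hookR u v = f
  calc f ≫ hookR u' v'
      = (ρ_ R).inv ≫ (f ▷ 𝟙_ C) ≫ (Q ◁ u') ≫ (α_ Q P' Q').inv ≫ (v' ▷ Q') ≫
        (λ_ Q').hom := by
        simp only [hookR, Category.assoc]; monoidal
    _ = (ρ_ R).inv ≫ (R ◁ u') ≫ (f ▷ (P' ⊗ Q')) ≫ (α_ Q P' Q').inv ≫ (v' ▷ Q') ≫
        (λ_ Q').hom := by
        rw [← whisker_exchange_assoc]
    _ = hookR u' (((f ▷ P') ≫ v')) := by
        simp only [hookR, comp_whiskerRight, Category.assoc]; monoidal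


/-- **Statement 2** (Lemma 2.3 (ii) of Kong–Runkel).
Let `A` be a symmetric Frobenius algebra in a sovereign tensor category `C` such that
`m ∘ Δ = id_A`.  Then `A` is a non-degenerate algebra, i.e. `Φ_A : A ⟶ A^∨` is invertible. -/
theorem symmetric_frobenius_nondegenerate
    {C : Type u} [Category.{v} C] [MonoidalCategory C] (S : Sovereign C)
    (A : Mon C) (Δ : A.X ⟶ A.X ⊗ A.X) (ε : A.X ⟶ 𝟙_ C)
    (hFrob : IsFrobenius A Δ ε)
    (hSym : IsSymmetric S A ε)
    (hSpec : Δ ≫ MonObj.mul (X := A.X) = 𝟙 A.X) :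
    Nondegenerate S A := by
  have frob1 := hFrob.2.1
  have frob2 := hFrob.2.2
  have counit1 := hFrob.1.2.1
  have counit2 := hFrob.1.2.2
  set b := S.coev A.X with hb0
  set b' := S.coev' A.X with hb0'
  set dev := S.ev A.X with hdev
  set dev' := S.ev' A.X with hdev'
  set e : 𝟙_ C ⟶ A.X ⊗ A.X := (MonObj.one (X := A.X)) ≫ Δ with he
  set p : A.X ⊗ A.X ⟶ 𝟙_ C := (MonObj.mul (X := A.X)) ≫ ε with hp
  have zig : hookL b dev = 𝟙 A.X := S.zig A.X
  have zag : hookR b dev = 𝟙 (S.dual A.X) := S.zag A.X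
  have zig' : hookR b' dev' = 𝟙 A.X := S.zig' A.X
  have hSym' : hookR b p = hookL b' p := hSym
  have S1 : hookL e p = 𝟙 A.X := by
    unfold hookL
    rw [he, hp]
    simp only [comp_whiskerRight, MonoidalCategory.whiskerLeft_comp, Category.assoc]
    slice_lhs 3 5 => rw [frob1]
    slice_lhs 2 3 => rw [MonObj.one_mul A.X]
    simp only [Category.assoc, Iso.inv_hom_id_assoc]
    exact counit2
  have S2 : hookR e p = 𝟙 A.X := by
    unfold hookR
    rw [he, hp]
    simp only [comp_whiskerRight, MonoidalCategory.whiskerLeft_comp, Category.assoc]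
    slice_lhs 3 5 => rw [frob2]
    slice_lhs 2 3 => rw [MonObj.mul_one A.X]
    simp only [Category.assoc, Iso.inv_hom_id_assoc]
    exact counit1
  set Φ : A.X ⟶ S.dual A.X := hookR b p with hΦ
  have ha : e ≫ (A.X ◁ Φ) = b := by
    rw [hΦ, hookC2, S1, id_whiskerRight, Category.comp_id]
  have hSym2 : hookR b p = hookL b' p := by rw [← hΦ]; exact hSym'
  have hbb : (A.X ◁ Φ) ≫ dev' = p := by
    rw [hΦ, hSym2, ← hookC0, zig', id_whiskerRight, Category.id_comp]
  have pairing_eq : pairing S A = (MonObj.mul (X := A.X)) ≫ ε := by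
    calc pairing S A
        = (ρ_ (A.X ⊗ A.X)).inv ≫ ((A.X ⊗ A.X) ◁ b) ≫ ((MonObj.mul (X := A.X)) ▷ (A.X ⊗ S.dual A.X)) ≫
          (α_ A.X A.X (S.dual A.X)).inv ≫ ((MonObj.mul (X := A.X)) ▷ S.dual A.X) ≫ dev' := by
          simp only [pairing, comp_whiskerRight, Category.assoc]; monoidal
      _ = (ρ_ (A.X ⊗ A.X)).inv ≫ ((MonObj.mul (X := A.X)) ▷ 𝟙_ C) ≫ (A.X ◁ b) ≫
          (α_ A.X A.X (S.dual A.X)).inv ≫ ((MonObj.mul (X := A.X)) ▷ S.dual A.X) ≫ dev' := by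
          rw [whisker_exchange_assoc]
      _ = (MonObj.mul (X := A.X)) ≫ (ρ_ A.X).inv ≫ (A.X ◁ b) ≫
          (α_ A.X A.X (S.dual A.X)).inv ≫ ((MonObj.mul (X := A.X)) ▷ S.dual A.X) ≫ dev' := by
          monoidal
      _ = (MonObj.mul (X := A.X)) ≫ (ρ_ A.X).inv ≫ (A.X ◁ e) ≫ (A.X ◁ (A.X ◁ Φ)) ≫
          (α_ A.X A.X (S.dual A.X)).inv ≫ ((MonObj.mul (X := A.X)) ▷ S.dual A.X) ≫ dev' := by
          rw [← ha]
          simp only [MonoidalCategory.whiskerLeft_comp, Category.assoc]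
      _ = (MonObj.mul (X := A.X)) ≫ (ρ_ A.X).inv ≫ (A.X ◁ e) ≫ (α_ A.X A.X A.X).inv ≫
          ((A.X ⊗ A.X) ◁ Φ) ≫ ((MonObj.mul (X := A.X)) ▷ S.dual A.X) ≫ dev' := by
          monoidal
      _ = (MonObj.mul (X := A.X)) ≫ (ρ_ A.X).inv ≫ (A.X ◁ e) ≫ (α_ A.X A.X A.X).inv ≫
          ((MonObj.mul (X := A.X)) ▷ A.X) ≫ (A.X ◁ Φ) ≫ dev' := by
          rw [whisker_exchange_assoc]
      _ = (MonObj.mul (X := A.X)) ≫ (ρ_ A.X).inv ≫ (A.X ◁ e) ≫ (α_ A.X A.X A.X).inv ≫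
          ((MonObj.mul (X := A.X)) ▷ A.X) ≫ (MonObj.mul (X := A.X)) ≫ ε := by
          rw [hbb, hp]
      _ = (MonObj.mul (X := A.X)) ≫ (ρ_ A.X).inv ≫ (A.X ◁ e) ≫ (A.X ◁ (MonObj.mul (X := A.X))) ≫ (MonObj.mul (X := A.X)) ≫ ε := by
          have hassoc : (α_ A.X A.X A.X).inv ≫ ((MonObj.mul (X := A.X)) ▷ A.X) ≫ (MonObj.mul (X := A.X)) =
              (A.X ◁ (MonObj.mul (X := A.X))) ≫ (MonObj.mul (X := A.X)) := by
            rw [MonObj.mul_assoc A.X, Iso.inv_hom_id_assoc]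
          slice_lhs 4 6 => rw [hassoc]
          simp only [Category.assoc]
      _ = (MonObj.mul (X := A.X)) ≫ (ρ_ A.X).inv ≫ (A.X ◁ (MonObj.one (X := A.X))) ≫ (MonObj.mul (X := A.X)) ≫ ε := by
          have h1 : (A.X ◁ e) ≫ (A.X ◁ (MonObj.mul (X := A.X))) = A.X ◁ (MonObj.one (X := A.X)) := by
            rw [← MonoidalCategory.whiskerLeft_comp, he, Category.assoc, hSpec,
              Category.comp_id]
          slice_lhs 3 4 => rw [h1]
          simp only [Category.assoc]
      _ = (MonObj.mul (X := A.X)) ≫ ε := by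
          slice_lhs 3 4 => rw [MonObj.mul_one A.X]
          simp only [Iso.inv_hom_id_assoc]
  have hPhi : Phi S A = Φ := by
    rw [hΦ]
    unfold Phi hookR
    rw [pairing_eq, hp]
  have hPsiPhi : hookR e dev ≫ Φ = 𝟙 (S.dual A.X) := by
    rw [hΦ, hookC1, S1, MonoidalCategory.whiskerLeft_id, Category.id_comp]
    exact zag
  have hPhiPsi : Φ ≫ hookR e dev = 𝟙 A.X := by
    rw [hΦ, hookC1, zig, MonoidalCategory.whiskerLeft_id, Category.id_comp]
    exact S2
  show IsIso (Phi S A)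
  rw [hPhi]
  exact ⟨hookR e dev, hPhiPsi, hPsiPhi⟩

end KR
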